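/- Let n ≥ 1 be an integer. There exists a sequence of positive real numbers (d_j)_{j≥1} with d₁ = 1, depending only on n, such that for every η ∈ ℂ with |η| = 1 and every b ∈ 𝔻 there is an r > 0 so that for all z ∈ ℂ with |z| < r, F₂(z) = ((n+1)²/(n+3))·F₁(z)·∑_{j=1}^∞ d_j·(ηb)^{j-1}·z^j, where F₁(z) = ∑_{k=n}^∞ (k!/(k-n)!)·δ_k·(ηb)^{k-n}·z^k and F₂(z) = ∑_{k=n+1}^∞ (k!/(k-n-1)!)·δ_k·(ηb)^{k-n-1}·z^k. -/

import Mathlib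

open ComplexConjugate

/-- `δ_k = 2/((k+1)(k+2))`, the coefficients of the reproducing kernel of the
derivative Hardy space `S²₁(𝔻)`. -/
noncomputable def hardyDelta (k : ℕ) : ℂ := 2 / (((k : ℂ) + 1) * ((k : ℂ) + 2))

/-- `F₁(z) = ∑_{k=n}^∞ (k!/(k-n)!) δ_k u^{k-n} z^k` (index shifted by `n`),
with `u = ηb`. -/
noncomputable def F1 (n : ℕ) (u z : ℂ) : ℂ :=
  ∑' k : ℕ, (Nat.factorial (k + n) : ℂ) / (Nat.factorial k : ℂ) *
    hardyDelta (k + n) * u ^ k * z ^ (k + n)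

/-- `F₂(z) = ∑_{k=n+1}^∞ (k!/(k-n-1)!) δ_k u^{k-n-1} z^k` (index shifted by `n+1`),
with `u = ηb`. -/
noncomputable def F2 (n : ℕ) (u z : ℂ) : ℂ :=
  ∑' k : ℕ, (Nat.factorial (k + n + 1) : ℂ) / (Nat.factorial k : ℂ) *
    hardyDelta (k + n + 1) * u ^ k * z ^ (k + n + 1)


namespace Stmt18
open PowerSeries Finset


/-- rising factorial product ∏_{i<m} (α+i) -/
noncomputable def pr (α : ℝ) (m : ℕ) : ℝ := ∏ i ∈ Finset.range m, (α + i)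

lemma pr_zero (α : ℝ) : pr α 0 = 1 := by simp [pr]

lemma pr_succ (α : ℝ) (m : ℕ) : pr α (m + 1) = pr α m * (α + m) := by
  rw [pr, Finset.prod_range_succ, pr]

lemma pr_front (α : ℝ) (m : ℕ) : pr α (m + 1) = α * pr (α + 1) m := by
  rw [pr, Finset.prod_range_succ', pr]
  have h : ∀ i ∈ Finset.range m, (α + ((i:ℕ)+1 : ℕ) : ℝ) = (α+1) + i := by
    intro i _; push_cast; ring
  rw [Finset.prod_congr rfl h]
  push_cast; ring

lemma pr_pos {α : ℝ} (hα : 0 < α) (m : ℕ) : 0 < pr α m := by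
  induction m with
  | zero => simp [pr_zero]
  | succ m ih => rw [pr_succ]; have : (0:ℝ) < α + m := by positivity
                 positivity

lemma pr_ne {α : ℝ} (hα : 0 < α) (m : ℕ) : pr α m ≠ 0 := (pr_pos hα m).ne'

/-- coefficients of the hypergeometric series F(α,β;γ;x). -/
noncomputable def hc (α β γ : ℝ) (m : ℕ) : ℝ :=
  pr α m * pr β m / (pr γ m * (Nat.factorial m))

lemma hc_zero (α β γ : ℝ) : hc α β γ 0 = 1 := by simp [hc, pr_zero]

lemma hc_succ (α β γ : ℝ) {m : ℕ} (hγ : 0 < γ) :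
    hc α β γ (m + 1) = hc α β γ m * ((α + m) * (β + m) / ((γ + m) * (m + 1))) := by
  have h1 : pr γ m ≠ 0 := pr_ne hγ m
  have h2 : (γ + m) ≠ 0 := by positivity
  have h3 : ((m:ℝ) + 1) ≠ 0 := by positivity
  have h4 : ((Nat.factorial m : ℝ)) ≠ 0 := by positivity
  rw [hc, hc, pr_succ, pr_succ, pr_succ, Nat.factorial_succ]
  push_cast
  field_simp

lemma hc_pos {α β γ : ℝ} (hα : 0 < α) (hβ : 0 < β) (hγ : 0 < γ) (m : ℕ) :
    0 < hc α β γ m := by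
  have h4 : (0:ℝ) < (Nat.factorial m : ℝ) := by positivity
  have := pr_pos hα m; have := pr_pos hβ m; have := pr_pos hγ m
  rw [hc]; positivity

lemma hc_symm (α β γ : ℝ) (m : ℕ) : hc α β γ m = hc β α γ m := by
  unfold hc; ring

/-- Gauss contiguous relation (C). -/
lemma relC {α β γ : ℝ} (hα : 0 < α) (hβ : 0 < β) (hγ : 0 < γ) (m : ℕ) :
    hc α (β+1) (γ+1) (m+1)
      = hc α β γ (m+1) + α*(γ-β)/(γ*(γ+1)) * hc (α+1) (β+1) (γ+2) m := by
  have e1 : pr α (m+1) = α * pr (α+1) m := pr_front α (m+1-1)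
  have e2 : pr β (m+1) = β * pr (β+1) m := pr_front β m
  have e3 : pr γ (m+1) = γ * pr (γ+1) m := pr_front γ m
  have e4 : pr (β+1) (m+1) = pr (β+1) m * (β+1+m) := pr_succ _ m
  have e5 : pr (γ+1) (m+1) = pr (γ+1) m * (γ+1+m) := pr_succ _ m
  have e6 : (γ+1) * pr (γ+2) m = pr (γ+1) m * (γ+1+m) := by
    have h21 : γ + 2 = (γ + 1) + 1 := by ring
    rw [h21, ← pr_front, pr_succ]
  have hPα : pr (α+1) m ≠ 0 := pr_ne (by positivity) m
  have hPβ : pr (β+1) m ≠ 0 := pr_ne (by positivity) m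
  have hPγ : pr (γ+1) m ≠ 0 := pr_ne (by positivity) m
  have h2 : (γ + 1 + (m:ℝ)) ≠ 0 := by positivity
  have h3 : ((m:ℝ) + 1) ≠ 0 := by positivity
  have h4 : ((Nat.factorial m : ℝ)) ≠ 0 := by positivity
  have hγ' : γ ≠ 0 := hγ.ne'
  have hγ1 : (γ + 1) ≠ 0 := by positivity
  have e7 : pr (γ+2) m = pr (γ+1) m * (γ+1+m) / (γ+1) := by
    rw [← e6]; field_simp
  rw [hc, hc, hc, e1, e2, e3, e4, e5, e7, Nat.factorial_succ]
  push_cast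
  field_simp
  ring

/-- contiguous relation (A). -/
lemma relA {α β γ : ℝ} (hα : 0 < α) (hβ : 0 < β) (hγ : 0 < γ) (m : ℕ) :
    hc α (β+1) γ (m+1)
      = hc α β γ (m+1) + α/γ * hc (α+1) (β+1) (γ+1) m := by
  have e1 : pr α (m+1) = α * pr (α+1) m := pr_front α m
  have e2 : pr β (m+1) = β * pr (β+1) m := pr_front β m
  have e3 : pr γ (m+1) = γ * pr (γ+1) m := pr_front γ m
  have e4 : pr (β+1) (m+1) = pr (β+1) m * (β+1+m) := pr_succ _ m
  have hPα : pr (α+1) m ≠ 0 := pr_ne (by positivity) m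
  have hPβ : pr (β+1) m ≠ 0 := pr_ne (by positivity) m
  have hPγ : pr (γ+1) m ≠ 0 := pr_ne (by positivity) m
  have h3 : ((m:ℝ) + 1) ≠ 0 := by positivity
  have h4 : ((Nat.factorial m : ℝ)) ≠ 0 := by positivity
  have hγ' : γ ≠ 0 := hγ.ne'
  rw [hc, hc, hc, e1, e2, e3, e4, Nat.factorial_succ]
  push_cast
  field_simp
  try ring

/-- hypergeometric power series -/
noncomputable def Hs (α β γ : ℝ) : PowerSeries ℝ := PowerSeries.mk (hc α β γ)

@[simp] lemma coeff_Hs (α β γ : ℝ) (m : ℕ) :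
    (PowerSeries.coeff m) (Hs α β γ) = hc α β γ m := PowerSeries.coeff_mk m _

@[simp] lemma constantCoeff_Hs (α β γ : ℝ) :
    (PowerSeries.constantCoeff) (Hs α β γ) = 1 := by
  rw [← PowerSeries.coeff_zero_eq_constantCoeff, coeff_Hs, hc_zero]

lemma Hs_symm (α β γ : ℝ) : Hs α β γ = Hs β α γ := by
  ext m; simp [hc_symm]

lemma Hs_ne (α β γ : ℝ) : (PowerSeries.constantCoeff) (Hs α β γ) ≠ 0 := by
  simp

lemma Hs_mul_inv (α β γ : ℝ) : Hs α β γ * (Hs α β γ)⁻¹ = 1 :=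
  PowerSeries.mul_inv_cancel _ (Hs_ne α β γ)

lemma relC_ps {α β γ : ℝ} (hα : 0 < α) (hβ : 0 < β) (hγ : 0 < γ) :
    Hs α (β+1) (γ+1)
      = Hs α β γ + PowerSeries.C (α*(γ-β)/(γ*(γ+1)))
          * (PowerSeries.X * Hs (α+1) (β+1) (γ+2)) := by
  ext m
  cases m with
  | zero => simp [hc_zero]
  | succ m =>
    rw [map_add, coeff_Hs, coeff_Hs, PowerSeries.coeff_C_mul,
      PowerSeries.coeff_succ_X_mul, coeff_Hs, relC hα hβ hγ]

lemma relA_ps {α β γ : ℝ} (hα : 0 < α) (hβ : 0 < β) (hγ : 0 < γ) :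
    Hs α (β+1) γ
      = Hs α β γ + PowerSeries.C (α/γ)
          * (PowerSeries.X * Hs (α+1) (β+1) (γ+1)) := by
  ext m
  cases m with
  | zero => simp [hc_zero]
  | succ m =>
    rw [map_add, coeff_Hs, coeff_Hs, PowerSeries.coeff_C_mul,
      PowerSeries.coeff_succ_X_mul, coeff_Hs, relA hα hβ hγ]

/-- the Gauss ratio F(α,β+1;γ+1)/F(α,β;γ) -/
noncomputable def Rg (α β γ : ℝ) : PowerSeries ℝ :=
  Hs α (β+1) (γ+1) * (Hs α β γ)⁻¹

lemma Rg_eq {α β γ : ℝ} (hα : 0 < α) (hβ : 0 < β) (hγ : 0 < γ) :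
    Rg α β γ = 1 + PowerSeries.C (α*(γ-β)/(γ*(γ+1)))
      * (PowerSeries.X * (Rg (β+1) α (γ+1) * Rg α β γ)) := by
  have key : Rg (β+1) α (γ+1) * Rg α β γ
      = Hs (α+1) (β+1) (γ+2) * (Hs α β γ)⁻¹ := by
    rw [Rg, Rg]
    have s1 : Hs (β+1) (α+1) (γ+1+1) = Hs (α+1) (β+1) (γ+2) := by
      rw [Hs_symm]; norm_num [show γ+1+1 = γ+2 by ring]
    have s2 : Hs (β+1) α (γ+1) = Hs α (β+1) (γ+1) := Hs_symm _ _ _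
    rw [s1, s2]
    have : (Hs α (β+1) (γ+1))⁻¹ * (Hs α (β+1) (γ+1) * (Hs α β γ)⁻¹)
        = (Hs α β γ)⁻¹ := by
      rw [← mul_assoc, PowerSeries.inv_mul_cancel _ (Hs_ne _ _ _), one_mul]
    rw [mul_assoc, this]
  rw [key, Rg, relC_ps hα hβ hγ, add_mul, Hs_mul_inv]
  ring

lemma coeff_zero_Rg (α β γ : ℝ) : (PowerSeries.coeff 0) (Rg α β γ) = 1 := by
  rw [PowerSeries.coeff_zero_eq_constantCoeff, Rg, map_mul, constantCoeff_Hs,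
    PowerSeries.constantCoeff_inv, constantCoeff_Hs]
  norm_num

/-- positivity of Gauss-ratio coefficients. -/
lemma Rg_pos : ∀ m : ℕ, ∀ α β γ : ℝ, 0 < α → 0 < β → β < γ → α < γ + 1 →
    0 < (PowerSeries.coeff m) (Rg α β γ) := by
  intro m
  induction m using Nat.strong_induction_on with
  | _ m ih =>
    intro α β γ hα hβ hβγ hαγ
    cases m with
    | zero => rw [coeff_zero_Rg]; norm_num
    | succ m =>
      have hγ : 0 < γ := lt_trans hβ hβγ
      rw [Rg_eq hα hβ hγ, map_add, PowerSeries.coeff_one, if_neg (Nat.succ_ne_zero m),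
        PowerSeries.coeff_C_mul, PowerSeries.coeff_succ_X_mul, zero_add,
        PowerSeries.coeff_mul]
      have hg : 0 < α*(γ-β)/(γ*(γ+1)) := by
        apply div_pos
        · nlinarith
        · nlinarith
      refine mul_pos hg (Finset.sum_pos ?_ ?_)
      · rintro ⟨i, j⟩ hij
        rw [Finset.HasAntidiagonal.mem_antidiagonal] at hij
        have hi : i < m + 1 := by omega
        have hj : j < m + 1 := by omega
        exact mul_pos
          (ih i hi (β+1) α (γ+1) (by linarith) hα (by linarith) (by linarith))
          (ih j hj α β γ hα hβ hβγ hαγ)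
      · exact ⟨(0, m), by simp⟩

/-- the ratio `F(a+1,a+1;c+1)/F(a+1,a;c+1)`. -/
noncomputable def Ps (a c : ℝ) : PowerSeries ℝ :=
  Hs (a+1) (a+1) (c+1) * (Hs (a+1) a (c+1))⁻¹

lemma Ps_eq {a c : ℝ} (ha : 0 < a) (hc : 0 < c) :
    Ps a c = 1 + PowerSeries.C ((a+1)/(c+1))
      * (PowerSeries.X * (Rg (a+1) (a+1) (c+1) * Ps a c)) := by
  have key : Rg (a+1) (a+1) (c+1) * Ps a c
      = Hs (a+2) (a+1) (c+2) * (Hs (a+1) a (c+1))⁻¹ := by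
    rw [Rg, Ps]
    have s1 : Hs (a+1) (a+1+1) (c+1+1) = Hs (a+2) (a+1) (c+2) := by
      rw [Hs_symm]; norm_num [show a+1+1 = a+2 by ring, show c+1+1 = c+2 by ring]
    rw [s1]
    rw [mul_assoc, ← mul_assoc ((Hs (a+1) (a+1) (c+1))⁻¹), PowerSeries.inv_mul_cancel _ (Hs_ne _ _ _), one_mul]
  have rel := relA_ps (α := a+1) (β := a) (γ := c+1) (by positivity) ha (by positivity)
  rw [key, Ps, rel, add_mul, Hs_mul_inv]
  ring

lemma coeff_zero_Ps (a c : ℝ) : (PowerSeries.coeff 0) (Ps a c) = 1 := by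
  rw [PowerSeries.coeff_zero_eq_constantCoeff, Ps, map_mul, constantCoeff_Hs,
    PowerSeries.constantCoeff_inv, constantCoeff_Hs]
  norm_num

lemma Ps_pos {a c : ℝ} (ha : 0 < a) (hac : a < c) :
    ∀ m : ℕ, 0 < (PowerSeries.coeff m) (Ps a c) := by
  have hc : 0 < c := lt_trans ha hac
  intro m
  induction m using Nat.strong_induction_on with
  | _ m ih =>
    cases m with
    | zero => rw [coeff_zero_Ps]; norm_num
    | succ m =>
      rw [Ps_eq ha hc, map_add, PowerSeries.coeff_one, if_neg (Nat.succ_ne_zero m),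
        PowerSeries.coeff_C_mul, PowerSeries.coeff_succ_X_mul, zero_add,
        PowerSeries.coeff_mul]
      have hg : 0 < (a+1)/(c+1) := by positivity
      refine mul_pos hg (Finset.sum_pos ?_ ?_)
      · rintro ⟨i, j⟩ hij
        rw [Finset.HasAntidiagonal.mem_antidiagonal] at hij
        have hj : j < m + 1 := by omega
        exact mul_pos
          (Rg_pos i (a+1) (a+1) (c+1) (by linarith) (by linarith) (by linarith) (by linarith))
          (ih j hj)
      · exact ⟨(0, m), by simp⟩

/-- the quotient `T = F(a+1,a+1;c+1)/F(a,a;c)`. -/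
noncomputable def Ts (a c : ℝ) : PowerSeries ℝ := Ps a c * Rg a a c

lemma Ts_pos {a c : ℝ} (ha : 0 < a) (hac : a < c) (m : ℕ) :
    0 < (PowerSeries.coeff m) (Ts a c) := by
  rw [Ts, PowerSeries.coeff_mul]
  refine Finset.sum_pos ?_ ⟨(0, m), by simp⟩
  rintro ⟨i, j⟩ hij
  exact mul_pos (Ps_pos ha hac i)
    (Rg_pos j a a c ha ha hac (by linarith))

lemma coeff_zero_Ts (a c : ℝ) : (PowerSeries.coeff 0) (Ts a c) = 1 := by
  rw [Ts, PowerSeries.coeff_mul]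
  simp [coeff_zero_Ps, PowerSeries.coeff_zero_eq_constantCoeff, Rg, map_mul,
    PowerSeries.constantCoeff_inv]

lemma Hs_mul_Ts (a c : ℝ) : Hs a a c * Ts a c = Hs (a+1) (a+1) (c+1) := by
  rw [Ts, Ps, Rg]
  have s2 : Hs (a+1) a (c+1) = Hs a (a+1) (c+1) := Hs_symm _ _ _
  rw [s2]
  calc Hs a a c * (Hs (a+1) (a+1) (c+1) * (Hs a (a+1) (c+1))⁻¹
        * (Hs a (a+1) (c+1) * (Hs a a c)⁻¹))
      = Hs (a+1) (a+1) (c+1) * ((Hs a (a+1) (c+1))⁻¹ * Hs a (a+1) (c+1))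
          * (Hs a a c * (Hs a a c)⁻¹) := by ring
    _ = Hs (a+1) (a+1) (c+1) := by
        rw [PowerSeries.inv_mul_cancel _ (Hs_ne _ _ _), Hs_mul_inv, mul_one, mul_one]

/-- the key convolution identity. -/
lemma conv_hc (a c : ℝ) (m : ℕ) :
    hc (a+1) (a+1) (c+1) m
      = ∑ p ∈ Finset.HasAntidiagonal.antidiagonal m, hc a a c p.1 * (PowerSeries.coeff p.2) (Ts a c) := by
  have := congrArg (PowerSeries.coeff m) (Hs_mul_Ts a c)
  rw [PowerSeries.coeff_mul] at this
  rw [← coeff_Hs (a+1) (a+1) (c+1) m, ← this]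
  exact Finset.sum_congr rfl fun p _ => by rw [coeff_Hs]


noncomputable def Tn (n : ℕ) : PowerSeries ℝ := Ts ((n:ℝ)+1) ((n:ℝ)+3)

lemma Tn_pos (n : ℕ) (m : ℕ) : 0 < (PowerSeries.coeff m) (Tn n) :=
  Ts_pos (by positivity) (by norm_num) m

lemma coeff_zero_Tn (n : ℕ) : (PowerSeries.coeff 0) (Tn n) = 1 :=
  coeff_zero_Ts _ _

lemma conv_hc' (n : ℕ) (m : ℕ) :
    hc ((n:ℝ)+2) ((n:ℝ)+2) ((n:ℝ)+4) m
      = ∑ p ∈ Finset.HasAntidiagonal.antidiagonal m,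
          hc ((n:ℝ)+1) ((n:ℝ)+1) ((n:ℝ)+3) p.1 * (PowerSeries.coeff p.2) (Tn n) := by
  have h := conv_hc ((n:ℝ)+1) ((n:ℝ)+3) m
  rw [show (n:ℝ)+1+1 = (n:ℝ)+2 from by ring, show (n:ℝ)+3+1 = (n:ℝ)+4 from by ring] at h
  exact h
/-- the `F₁` coefficient sequence (real). -/
noncomputable def aR (n k : ℕ) : ℝ :=
  (Nat.factorial (k+n) : ℝ)/(Nat.factorial k) * (2/(((k:ℝ)+n+1)*((k:ℝ)+n+2)))

lemma aR_pos (n k : ℕ) : 0 < aR n k := by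
  have h1 : (0:ℝ) < (Nat.factorial (k+n) : ℝ) := by positivity
  have h2 : (0:ℝ) < (Nat.factorial k : ℝ) := by positivity
  have h3 : (0:ℝ) < (k:ℝ)+n+1 := by positivity
  have h4 : (0:ℝ) < (k:ℝ)+n+2 := by positivity
  rw [aR]; positivity

lemma aR_eq_hc (n : ℕ) (k : ℕ) :
    aR n k = aR n 0 * hc ((n:ℝ)+1) ((n:ℝ)+1) ((n:ℝ)+3) k := by
  induction k with
  | zero => rw [hc_zero, mul_one]
  | succ k ih =>
    have hfac : k + 1 + n = (k + n) + 1 := by omega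
    have hγ : (0:ℝ) < (n:ℝ)+3 := by positivity
    rw [hc_succ _ _ _ hγ, ← mul_assoc, ← ih, aR, aR, hfac, Nat.factorial_succ,
      Nat.factorial_succ k]
    have h2 : ((Nat.factorial k : ℝ)) ≠ 0 := by positivity
    have h3 : ((k:ℝ)+n+1) ≠ 0 := by positivity
    have h4 : ((k:ℝ)+n+2) ≠ 0 := by positivity
    have h5 : ((k:ℝ)+1+n+1) ≠ 0 := by positivity
    have h6 : ((k:ℝ)+1+n+2) ≠ 0 := by positivity
    have h7 : ((n:ℝ)+3+k) ≠ 0 := by positivity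
    have h8 : ((k:ℝ)+1) ≠ 0 := by positivity
    push_cast
    field_simp
    ring

lemma aR_zero (n : ℕ) : aR n 0 = (Nat.factorial n : ℝ) * (2/(((n:ℝ)+1)*((n:ℝ)+2))) := by
  simp [aR]

/-- `bR n = aR (n+1)` is the `F₂` coefficient sequence; basic identity. -/
lemma bR_zero_eq (n : ℕ) :
    aR (n+1) 0 = (((n:ℝ)+1)^2/((n:ℝ)+3)) * aR n 0 := by
  rw [aR_zero, aR_zero, Nat.factorial_succ]
  have h1 : ((n:ℝ)+1) ≠ 0 := by positivity
  have h2 : ((n:ℝ)+2) ≠ 0 := by positivity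
  have h3 : ((n:ℝ)+3) ≠ 0 := by positivity
  push_cast
  field_simp
  ring

lemma bR_eq_hc (n : ℕ) (k : ℕ) :
    aR (n+1) k = aR (n+1) 0 * hc ((n:ℝ)+2) ((n:ℝ)+2) ((n:ℝ)+4) k := by
  have := aR_eq_hc (n+1) k
  have e1 : ((n+1:ℕ):ℝ)+1 = (n:ℝ)+2 := by push_cast; ring
  have e2 : ((n+1:ℕ):ℝ)+3 = (n:ℝ)+4 := by push_cast; ring
  rwa [e1, e2] at this

/-- the master convolution identity. -/
lemma conv (n : ℕ) (m : ℕ) :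
    aR (n+1) m = (((n:ℝ)+1)^2/((n:ℝ)+3)) *
      ∑ p ∈ Finset.HasAntidiagonal.antidiagonal m, aR n p.1 * (PowerSeries.coeff p.2) (Tn n) := by
  rw [bR_eq_hc, conv_hc', bR_zero_eq, Finset.mul_sum, Finset.mul_sum]
  refine Finset.sum_congr rfl fun p _ => ?_
  rw [aR_eq_hc n p.1]
  ring

/-- growth bound for the quotient coefficients. -/
lemma eT_le (n : ℕ) (m : ℕ) :
    (PowerSeries.coeff m) (Tn n) ≤ aR (n+1) m / ((((n:ℝ)+1)^2/((n:ℝ)+3)) * aR n 0) := by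
  have hcc : (0:ℝ) < ((n:ℝ)+1)^2/((n:ℝ)+3) := by positivity
  have ha0 : 0 < aR n 0 := aR_pos n 0
  rw [le_div_iff₀ (by positivity)]
  have key := conv n m
  have hsum : aR n 0 * (PowerSeries.coeff m) (Tn n)
      ≤ ∑ p ∈ Finset.HasAntidiagonal.antidiagonal m, aR n p.1 * (PowerSeries.coeff p.2) (Tn n) := by
    have := Finset.single_le_sum (f := fun p : ℕ × ℕ => aR n p.1 * (PowerSeries.coeff p.2) (Tn n))
      (fun p _ => le_of_lt (mul_pos (aR_pos n p.1) (Tn_pos n p.2)))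
      (show ((0:ℕ), m) ∈ Finset.HasAntidiagonal.antidiagonal m by simp)
    simpa using this
  calc (PowerSeries.coeff m) (Tn n) * ((((n:ℝ)+1)^2/((n:ℝ)+3)) * aR n 0)
      = (((n:ℝ)+1)^2/((n:ℝ)+3)) * (aR n 0 * (PowerSeries.coeff m) (Tn n)) := by ring
    _ ≤ (((n:ℝ)+1)^2/((n:ℝ)+3)) *
        ∑ p ∈ Finset.HasAntidiagonal.antidiagonal m, aR n p.1 * (PowerSeries.coeff p.2) (Tn n) := by
        exact mul_le_mul_of_nonneg_left hsum (le_of_lt hcc)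
    _ = aR (n+1) m := (conv n m).symm

lemma fact_ratio_le (n k : ℕ) :
    (Nat.factorial (k+n)) ≤ Nat.factorial k * ((k+1)*(n+1))^n := by
  induction n with
  | zero => simp
  | succ n ih =>
    have h1 : k + (n+1) = (k+n) + 1 := by omega
    rw [h1, Nat.factorial_succ]
    calc (k+n+1) * Nat.factorial (k+n)
        ≤ ((k+1)*(n+2)) * (Nat.factorial k * ((k+1)*(n+1))^n) := by
          apply Nat.mul_le_mul _ ih
          nlinarith
      _ ≤ Nat.factorial k * ((k+1)*(n+2))^(n+1) := by
          rw [pow_succ]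
          have h2 : ((k+1)*(n+1))^n ≤ ((k+1)*(n+2))^n := by
            apply Nat.pow_le_pow_left; nlinarith
          calc (k+1)*(n+2) * (Nat.factorial k * ((k+1)*(n+1))^n)
              ≤ (k+1)*(n+2) * (Nat.factorial k * ((k+1)*(n+2))^n) := by
                exact Nat.mul_le_mul_left _ (Nat.mul_le_mul_left _ h2)
            _ = Nat.factorial k * (((k+1)*(n+2))^n * ((k+1)*(n+2))) := by ring

lemma aR_le (n k : ℕ) : aR n k ≤ (((n:ℝ)+1) * ((k:ℝ)+1))^n := by
  have h2 : (0:ℝ) < (Nat.factorial k : ℝ) := by positivity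
  have hd : (2/(((k:ℝ)+n+1)*((k:ℝ)+n+2))) ≤ 1 := by
    rw [div_le_one (by positivity)]
    nlinarith [Nat.cast_nonneg (α := ℝ) k, Nat.cast_nonneg (α := ℝ) n]
  have hf : ((Nat.factorial (k+n) : ℝ))/(Nat.factorial k) ≤ (((n:ℝ)+1) * ((k:ℝ)+1))^n := by
    rw [div_le_iff₀ h2]
    have := fact_ratio_le n k
    have h3 : ((Nat.factorial (k+n)) : ℝ) ≤ ((Nat.factorial k * ((k+1)*(n+1))^n : ℕ) : ℝ) := by
      exact_mod_cast this
    push_cast at h3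
    calc ((Nat.factorial (k+n)) : ℝ) ≤ (Nat.factorial k : ℝ) * (((k:ℝ)+1)*((n:ℝ)+1))^n := h3
      _ = (((n:ℝ)+1) * ((k:ℝ)+1))^n * (Nat.factorial k : ℝ) := by ring
  have hpos : (0:ℝ) ≤ ((Nat.factorial (k+n) : ℝ))/(Nat.factorial k) := by positivity
  calc aR n k ≤ ((Nat.factorial (k+n) : ℝ))/(Nat.factorial k) * 1 := by
        exact mul_le_mul_of_nonneg_left hd hpos
    _ = ((Nat.factorial (k+n) : ℝ))/(Nat.factorial k) := mul_one _
    _ ≤ (((n:ℝ)+1) * ((k:ℝ)+1))^n := hf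

lemma summable_poly_geom (N : ℕ) {r : ℝ} (h0 : 0 ≤ r) (h1 : r < 1) :
    Summable fun k : ℕ => ((k:ℝ)+1)^N * r^k := by
  have hr : ‖r‖ < 1 := by rwa [Real.norm_eq_abs, abs_of_nonneg h0]
  have hs1 : Summable fun k : ℕ => (k:ℝ)^N * r^k :=
    summable_pow_mul_geometric_of_norm_lt_one N hr
  have hs2 : Summable fun k : ℕ => r^k := summable_geometric_of_lt_one h0 h1
  have hs : Summable fun k : ℕ => (2:ℝ)^N * ((k:ℝ)^N * r^k) + (2:ℝ)^N * r^k :=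
    ((hs1.mul_left _).add (hs2.mul_left _))
  refine Summable.of_nonneg_of_le (fun k => by positivity) (fun k => ?_) hs
  have hk : ((k:ℝ)+1)^N ≤ (2:ℝ)^N * (k:ℝ)^N + (2:ℝ)^N := by
    rcases Nat.eq_zero_or_pos k with hk0 | hk0
    · subst hk0; simp
      calc (1:ℝ) ≤ 2^N := by
            calc (1:ℝ) = 1^N := (one_pow N).symm
              _ ≤ 2^N := pow_le_pow_left₀ (by norm_num) (by norm_num) N
        _ ≤ 2^N * 0^N + 2^N := by
            have : (0:ℝ) ≤ (2:ℝ)^N * (0:ℝ)^N := by positivity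
            linarith
    · have h1k : (1:ℝ) ≤ (k:ℝ) := by exact_mod_cast hk0
      calc ((k:ℝ)+1)^N ≤ ((2:ℝ)*(k:ℝ))^N := by
            apply pow_le_pow_left₀ (by positivity); linarith
        _ = (2:ℝ)^N * (k:ℝ)^N := by rw [mul_pow]
        _ ≤ (2:ℝ)^N * (k:ℝ)^N + (2:ℝ)^N := by
            have : (0:ℝ) < (2:ℝ)^N := by positivity
            linarith
  have hrk : (0:ℝ) ≤ r^k := by positivity
  calc ((k:ℝ)+1)^N * r^k ≤ ((2:ℝ)^N * (k:ℝ)^N + (2:ℝ)^N) * r^k :=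
        mul_le_mul_of_nonneg_right hk hrk
    _ = (2:ℝ)^N * ((k:ℝ)^N * r^k) + (2:ℝ)^N * r^k := by ring

/-- summability of a polynomially-bounded sequence against a geometric. -/
lemma summable_of_poly_bound (N : ℕ) (f : ℕ → ℝ) (C : ℝ)
    (hf : ∀ k, 0 ≤ f k) (hb : ∀ k, f k ≤ C * ((k:ℝ)+1)^N)
    {w : ℂ} (hw : ‖w‖ < 1) :
    Summable fun k : ℕ => ‖(f k : ℂ) * w^k‖ := by
  have h0 : (0:ℝ) ≤ ‖w‖ := norm_nonneg w
  have hs := summable_poly_geom N h0 hw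
  refine Summable.of_nonneg_of_le (fun k => norm_nonneg _) (fun k => ?_) (hs.mul_left C)
  rw [norm_mul, norm_pow]
  have h1 : ‖((f k : ℝ) : ℂ)‖ = f k := by
    rw [Complex.norm_real, Real.norm_eq_abs, abs_of_nonneg (hf k)]
  rw [h1]
  calc f k * ‖w‖^k ≤ (C * ((k:ℝ)+1)^N) * ‖w‖^k := by
        exact mul_le_mul_of_nonneg_right (hb k) (by positivity)
    _ = C * (((k:ℝ)+1)^N * ‖w‖^k) := by ring


end Stmt18

open Stmt18 in
/-- The power series expansion of `F₂/F₁`: there exist positive reals `d_j`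
(`j ≥ 1`, depending only on `n`) with `d₁ = 1` such that near `0`,
`F₂(z) = ((n+1)²/(n+3)) F₁(z) ∑_{j=1}^∞ d_j (ηb)^{j-1} z^j`. -/
theorem stmt18 (n : ℕ) (hn : 1 ≤ n) :
    ∃ d : ℕ → ℝ, (∀ j, 1 ≤ j → 0 < d j) ∧ d 1 = 1 ∧
      ∀ η : ℂ, ‖η‖ = 1 → ∀ b ∈ Metric.ball (0 : ℂ) 1,
        ∃ r > 0, ∀ z : ℂ, ‖z‖ < r →
          F2 n (η * b) z
            = (((n : ℂ) + 1) ^ 2 / ((n : ℂ) + 3)) * F1 n (η * b) z *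
                ∑' j : ℕ, (d (j + 1) : ℂ) * (η * b) ^ j * z ^ (j + 1) := by
  classical
  set eT : ℕ → ℝ := fun j => (PowerSeries.coeff j) (Tn n) with heT
  refine ⟨fun j => if j = 0 then 1 else eT (j-1), ?_, ?_, ?_⟩
  · intro j hj
    have hj0 : ¬ (j = 0) := by omega
    simp only [hj0, if_false]
    exact Tn_pos n (j-1)
  · norm_num
    exact coeff_zero_Tn n
  intro η hη b hb
  refine ⟨1, one_pos, ?_⟩
  intro z hz
  set u : ℂ := η * b with hu
  have hzn : ‖z‖ < 1 := by exact hz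
  have hun : ‖u‖ < 1 := by
    rw [hu, norm_mul]
    have hb1 : ‖b‖ < 1 := by simpa using Metric.mem_ball.mp hb
    have hη1 : ‖η‖ = 1 := by exact hη
    rw [hη1, one_mul]
    exact hb1
  set w : ℂ := u * z with hw
  have hwn : ‖w‖ < 1 := by
    rw [hw, norm_mul]
    calc ‖u‖ * ‖z‖ ≤ ‖u‖ * 1 := by
          exact mul_le_mul_of_nonneg_left (le_of_lt hzn) (norm_nonneg u)
      _ = ‖u‖ := mul_one _
      _ < 1 := hun
  -- summability facts
  have hsumA : Summable fun k : ℕ => ‖((aR n k : ℝ) : ℂ) * w^k‖ := by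
    refine summable_of_poly_bound n (aR n) (((n:ℝ)+1)^n) (fun k => (aR_pos n k).le)
      (fun k => ?_) hwn
    calc aR n k ≤ (((n:ℝ)+1) * ((k:ℝ)+1))^n := aR_le n k
      _ = ((n:ℝ)+1)^n * ((k:ℝ)+1)^n := mul_pow _ _ _
  have hccpos : (0:ℝ) < ((n:ℝ)+1)^2/((n:ℝ)+3) := by positivity
  have ha0 : (0:ℝ) < aR n 0 := aR_pos n 0
  have hsumE : Summable fun j : ℕ => ‖((eT j : ℝ) : ℂ) * w^j‖ := by
    refine summable_of_poly_bound (n+1) eT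
      (((n:ℝ)+2)^(n+1) / ((((n:ℝ)+1)^2/((n:ℝ)+3)) * aR n 0))
      (fun j => (Tn_pos n j).le) (fun j => ?_) hwn
    have hbnd : aR (n+1) j ≤ ((n:ℝ)+2)^(n+1) * ((j:ℝ)+1)^(n+1) := by
      have h := aR_le (n+1) j
      have e1 : ((((n+1:ℕ)):ℝ)+1) = (n:ℝ)+2 := by push_cast; ring
      rw [e1] at h
      calc aR (n+1) j ≤ (((n:ℝ)+2) * ((j:ℝ)+1))^(n+1) := h
        _ = ((n:ℝ)+2)^(n+1) * ((j:ℝ)+1)^(n+1) := mul_pow _ _ _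
    calc eT j ≤ aR (n+1) j / ((((n:ℝ)+1)^2/((n:ℝ)+3)) * aR n 0) := eT_le n j
      _ ≤ (((n:ℝ)+2)^(n+1) * ((j:ℝ)+1)^(n+1)) / ((((n:ℝ)+1)^2/((n:ℝ)+3)) * aR n 0) := by
          exact (div_le_div_iff_of_pos_right (by positivity)).mpr hbnd
      _ = (((n:ℝ)+2)^(n+1) / ((((n:ℝ)+1)^2/((n:ℝ)+3)) * aR n 0)) * ((j:ℝ)+1)^(n+1) := by
          ring
  -- coefficient casts
  have cast2 : ∀ k : ℕ, (Nat.factorial (k + n + 1) : ℂ) / (Nat.factorial k : ℂ) *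
      hardyDelta (k + n + 1) * u ^ k * z ^ (k + n + 1)
      = z^(n+1) * (((aR (n+1) k : ℝ) : ℂ) * w^k) := by
    intro k
    have hfk : (Nat.factorial k : ℂ) ≠ 0 := Nat.cast_ne_zero.mpr (Nat.factorial_ne_zero k)
    have h1 : ((k+n+2 : ℕ) : ℂ) ≠ 0 := Nat.cast_ne_zero.mpr (by omega)
    have h2 : ((k+n+3 : ℕ) : ℂ) ≠ 0 := Nat.cast_ne_zero.mpr (by omega)
    push_cast at h1 h2
    have hfkR : ((Nat.factorial k : ℝ)) ≠ 0 := by positivity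
    have h1R : ((k:ℝ)+(n+1)+1) ≠ 0 := by positivity
    have h2R : ((k:ℝ)+(n+1)+2) ≠ 0 := by positivity
    rw [hw, hardyDelta, aR]
    have hkn : k + (n+1) = k + n + 1 := by omega
    rw [hkn]
    push_cast
    rw [mul_pow]
    field_simp
    ring
  have cast1 : ∀ k : ℕ, (Nat.factorial (k + n) : ℂ) / (Nat.factorial k : ℂ) *
      hardyDelta (k + n) * u ^ k * z ^ (k + n)
      = z^n * (((aR n k : ℝ) : ℂ) * w^k) := by
    intro k
    have hfk : (Nat.factorial k : ℂ) ≠ 0 := Nat.cast_ne_zero.mpr (Nat.factorial_ne_zero k)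
    have h1 : ((k+n+1 : ℕ) : ℂ) ≠ 0 := Nat.cast_ne_zero.mpr (by omega)
    have h2 : ((k+n+2 : ℕ) : ℂ) ≠ 0 := Nat.cast_ne_zero.mpr (by omega)
    push_cast at h1 h2
    have hfkR : ((Nat.factorial k : ℝ)) ≠ 0 := by positivity
    have h1R : ((k:ℝ)+n+1) ≠ 0 := by positivity
    have h2R : ((k:ℝ)+n+2) ≠ 0 := by positivity
    rw [hw, hardyDelta, aR]
    push_cast
    rw [mul_pow]
    field_simp
    ring
  have hF2 : F2 n u z = z^(n+1) * ∑' k : ℕ, ((aR (n+1) k : ℝ):ℂ) * w^k := by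
    rw [F2, tsum_congr cast2, tsum_mul_left]
  have hF1 : F1 n u z = z^n * ∑' k : ℕ, ((aR n k : ℝ):ℂ) * w^k := by
    rw [F1, tsum_congr cast1, tsum_mul_left]
  have hS : (∑' j : ℕ, ((if j + 1 = 0 then (1:ℝ) else eT (j+1-1)) : ℝ) * u ^ j * z ^ (j + 1) : ℂ)
      = z * ∑' j : ℕ, ((eT j : ℝ):ℂ) * w^j := by
    rw [← tsum_mul_left]
    refine tsum_congr fun j => ?_
    have : ((if j + 1 = 0 then (1:ℝ) else eT (j+1-1))) = eT j := by
      simp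
    rw [this, hw]
    rw [mul_pow, pow_succ]
    ring
  -- the Cauchy product
  set cc : ℝ := ((n:ℝ)+1)^2/((n:ℝ)+3) with hcc
  have hccne : cc ≠ 0 := ne_of_gt hccpos
  have hcauchy : (∑' k : ℕ, ((aR n k : ℝ):ℂ) * w^k) * (∑' j : ℕ, ((eT j : ℝ):ℂ) * w^j)
      = ∑' m : ℕ, ((aR (n+1) m / cc : ℝ) : ℂ) * w^m := by
    rw [tsum_mul_tsum_eq_tsum_sum_antidiagonal_of_summable_norm hsumA hsumE]
    refine tsum_congr fun m => ?_
    have step : ∀ p ∈ Finset.HasAntidiagonal.antidiagonal m,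
        (((aR n p.1 : ℝ):ℂ) * w^p.1) * (((eT p.2 : ℝ):ℂ) * w^p.2)
        = ((aR n p.1 * eT p.2 : ℝ) : ℂ) * w^m := by
      intro p hp
      rw [Finset.HasAntidiagonal.mem_antidiagonal] at hp
      rw [← hp, pow_add]
      push_cast
      ring
    rw [Finset.sum_congr rfl step, ← Finset.sum_mul]
    congr 1
    rw [← Complex.ofReal_sum]
    rw [Complex.ofReal_inj]
    rw [eq_div_iff hccne]
    rw [conv n m]
    ring
  -- assemble
  have hccC : (((n : ℂ) + 1) ^ 2 / ((n : ℂ) + 3)) = ((cc : ℝ) : ℂ) := by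
    rw [hcc]
    have h3 : ((n:ℂ)+3) ≠ 0 := by
      have : ((n+3 : ℕ) : ℂ) ≠ 0 := Nat.cast_ne_zero.mpr (by omega)
      push_cast at this; exact this
    have h3R : ((n:ℝ)+3) ≠ 0 := by positivity
    push_cast
    ring
  have final : ∀ m : ℕ, ((cc:ℝ):ℂ) * (((aR (n+1) m / cc : ℝ) : ℂ) * w^m)
      = ((aR (n+1) m : ℝ):ℂ) * w^m := by
    intro m
    have h : ((cc:ℝ):ℂ) ≠ 0 := Complex.ofReal_ne_zero.mpr hccne
    push_cast at h ⊢
    field_simp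
  set AA : ℂ := ∑' k : ℕ, ((aR n k : ℝ):ℂ) * w^k with hAA
  set EE : ℂ := ∑' j : ℕ, ((eT j : ℝ):ℂ) * w^j with hEE
  set BB : ℂ := ∑' k : ℕ, ((aR (n+1) k : ℝ):ℂ) * w^k with hBB
  rw [hF2, hF1, hS, hccC]
  have hB : BB = ((cc:ℝ):ℂ) * (AA * EE) := by
    rw [hcauchy, ← tsum_mul_left, tsum_congr final]
  rw [hB]
  ring
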